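/- arXiv:2202.02011 — 8 statements merged into one kernel-verified Lean document; each statement's English description precedes it below -/
import Mathlib

section
/- For any x ≥ 0 and any natural number m, the tail of the exponential series satisfies ∑_{n=m}^∞ xⁿ/n! ≤ e^{e·x - m}. -/
/-- For `x ≥ 0` and `m : ℕ`, the tail of the exponential series satisfies
`∑_{n=m}^∞ xⁿ/n! ≤ e^{e·x − m}`. -/
theorem exp_series_tail_bound (x : ℝ) (hx : 0 ≤ x) (m : ℕ) :
    ∑' n : ℕ, x ^ (n + m) / (n + m).factorial ≤
      Real.exp (Real.exp 1 * x - m) := by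
  have hex : 0 ≤ Real.exp 1 * x := mul_nonneg (Real.exp_pos 1).le hx
  have hsum : Summable (fun k : ℕ => (Real.exp 1 * x) ^ k / k.factorial) :=
    Real.summable_pow_div_factorial _
  have hinj : Function.Injective (fun n : ℕ => n + m) := fun a b h => by
    simpa using h
  have hsum1 : Summable (fun n : ℕ => x ^ (n + m) / (n + m).factorial) := by
    exact (Real.summable_pow_div_factorial x).comp_injective hinj
  have hsum2 : Summable (fun n : ℕ => (Real.exp 1 * x) ^ (n + m) / (n + m).factorial) :=
    hsum.comp_injective hinj
  have key : ∀ n : ℕ, x ^ (n + m) / (n + m).factorial ≤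
      Real.exp (-(m : ℝ)) * ((Real.exp 1 * x) ^ (n + m) / (n + m).factorial) := by
    intro n
    have h1 : (Real.exp 1 * x) ^ (n + m) = Real.exp (n + m : ℕ) * x ^ (n + m) := by
      rw [mul_pow, ← Real.exp_nat_mul]
      ring_nf
    rw [h1]
    rw [mul_div_assoc, ← mul_assoc, ← Real.exp_add]
    have h2 : (1 : ℝ) ≤ Real.exp (-(m : ℝ) + (n + m : ℕ)) := by
      rw [Real.one_le_exp_iff]
      push_cast
      linarith
    have h3 : 0 ≤ x ^ (n + m) / (n + m).factorial :=
      div_nonneg (pow_nonneg hx _) (by positivity)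
    nlinarith [h3, h2]
  calc ∑' n : ℕ, x ^ (n + m) / (n + m).factorial
      ≤ ∑' n : ℕ, Real.exp (-(m : ℝ)) * ((Real.exp 1 * x) ^ (n + m) / (n + m).factorial) :=
        Summable.tsum_le_tsum key hsum1 (hsum2.mul_left _)
    _ = Real.exp (-(m : ℝ)) * ∑' n : ℕ, (Real.exp 1 * x) ^ (n + m) / (n + m).factorial :=
        tsum_mul_left
    _ ≤ Real.exp (-(m : ℝ)) * ∑' k : ℕ, (Real.exp 1 * x) ^ k / k.factorial := by
        apply mul_le_mul_of_nonneg_left _ (Real.exp_pos _).le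
        refine Summable.tsum_le_tsum_of_inj (fun n => n + m) hinj
          (fun c _ => div_nonneg (pow_nonneg hex _) (by positivity))
          (fun n => le_refl _) hsum2 hsum
    _ = Real.exp (-(m : ℝ)) * Real.exp (Real.exp 1 * x) := by
        rw [Real.exp_eq_exp_ℝ, NormedSpace.exp_eq_tsum_div]
    _ = Real.exp (Real.exp 1 * x - m) := by
        rw [← Real.exp_add]; ring_nf
end

section
/- For anti-Hermitian matrices A and B and any real x ≥ 0, one has ‖e^{x(A+B)} − e^{xA}e^{xB}‖ ≤ (x²/2)·‖[A,B]‖ (first-order Trotter error bound). -/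
set_option maxHeartbeats 1000000

open Matrix NormedSpace
open scoped Matrix.Norms.L2Operator

noncomputable section TrotterAux

variable {n : ℕ}

lemma expDeriv (M : Matrix (Fin n) (Fin n) ℂ) (t : ℝ) :
    HasDerivAt (fun u : ℝ => exp ((u : ℂ) • M)) (exp ((t : ℂ) • M) * M) t := by
  have h := hasDerivAt_exp_smul_const (𝕂 := ℝ) M t
  simp only [Complex.coe_smul] at h ⊢
  exact h

lemma norm_exp_skew (M : Matrix (Fin n) (Fin n) ℂ) (hM : Mᴴ = -M) :
    ‖exp M‖ ≤ 1 := by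
  have h1 : (exp M)ᴴ * exp M = 1 := by
    rw [← Matrix.exp_conjTranspose, hM,
      ← Matrix.exp_add_of_commute (-M) M (Commute.neg_left rfl)]
    simp
  have h2 : ‖(exp M)ᴴ * exp M‖ = ‖exp M‖ * ‖exp M‖ := CStarRing.norm_star_mul_self
  rw [h1] at h2
  have hone : ‖(1 : Matrix (Fin n) (Fin n) ℂ)‖ ≤ 1 := by
    have := CStarRing.norm_star_mul_self (x := (1 : Matrix (Fin n) (Fin n) ℂ))
    simp only [star_one, mul_one] at this
    nlinarith [norm_nonneg (1 : Matrix (Fin n) (Fin n) ℂ)]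
  nlinarith [norm_nonneg (exp M)]

lemma skew_smul (M : Matrix (Fin n) (Fin n) ℂ) (hM : Mᴴ = -M) (t : ℝ) :
    ((t : ℂ) • M)ᴴ = -((t : ℂ) • M) := by
  rw [conjTranspose_smul, hM, Complex.star_def, Complex.conj_ofReal, smul_neg]

lemma norm_exp_smul_skew (M : Matrix (Fin n) (Fin n) ℂ) (hM : Mᴴ = -M) (t : ℝ) :
    ‖exp ((t : ℂ) • M)‖ ≤ 1 :=
  norm_exp_skew _ (skew_smul M hM t)

lemma comm_exp_bound (A B : Matrix (Fin n) (Fin n) ℂ) (hA : Aᴴ = -A)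
    (t : ℝ) (ht : 0 ≤ t) :
    ‖B * exp ((t : ℂ) • A) - exp ((t : ℂ) • A) * B‖ ≤ t * ‖A * B - B * A‖ := by
  set h : ℝ → Matrix (Fin n) (Fin n) ℂ :=
    fun u => exp ((↑(t - u) : ℂ) • A) * B * exp ((u : ℂ) • A) with hh
  have hderiv : ∀ u : ℝ, HasDerivAt h
      (exp ((↑(t - u) : ℂ) • A) * (B * A - A * B) * exp ((u : ℂ) • A)) u := by
    intro u
    have d1 : HasDerivAt (fun v : ℝ => exp ((↑(t - v) : ℂ) • A))
        (-(exp ((↑(t - u) : ℂ) • A) * A)) u := by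
      have hinner : HasDerivAt (fun v : ℝ => t - v) (-1 : ℝ) u := by
        simpa using (hasDerivAt_id u).const_sub t
      have h2 := HasDerivAt.scomp u (expDeriv A (t - u)) hinner
      rw [neg_one_smul] at h2
      exact h2
    have d2 := expDeriv A u
    have hmul := (d1.mul_const B).mul d2
    refine hmul.congr_deriv ?_
    symm
    have hcomm : exp ((u : ℂ) • A) * A = A * exp ((u : ℂ) • A) :=
      (((Commute.refl A).smul_right ((u : ℂ))).exp_right).eq.symm
    rw [mul_assoc _ B, hcomm]
    noncomm_ring
  have hbound : ∀ u : ℝ,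
      ‖exp ((↑(t - u) : ℂ) • A) * (B * A - A * B) * exp ((u : ℂ) • A)‖
        ≤ ‖A * B - B * A‖ := by
    intro u
    have e1 := norm_exp_smul_skew A hA (t - u)
    have e2 := norm_exp_smul_skew A hA u
    have hrev : ‖B * A - A * B‖ = ‖A * B - B * A‖ := norm_sub_rev _ _
    calc ‖exp ((↑(t - u) : ℂ) • A) * (B * A - A * B) * exp ((u : ℂ) • A)‖
        ≤ ‖exp ((↑(t - u) : ℂ) • A) * (B * A - A * B)‖ * ‖exp ((u : ℂ) • A)‖ :=
          norm_mul_le _ _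
      _ ≤ ‖exp ((↑(t - u) : ℂ) • A)‖ * ‖B * A - A * B‖ * ‖exp ((u : ℂ) • A)‖ := by
          gcongr; exact norm_mul_le _ _
      _ ≤ ‖exp ((↑(t - u) : ℂ) • A)‖ * ‖B * A - A * B‖ := by
          exact mul_le_of_le_one_right (by positivity) e2
      _ ≤ ‖B * A - A * B‖ := mul_le_of_le_one_left (norm_nonneg _) e1
      _ = ‖A * B - B * A‖ := norm_sub_rev _ _
  have key := Convex.norm_image_sub_le_of_norm_hasDerivWithin_le
    (f := h) (s := Set.Icc (0:ℝ) t)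
    (fun u _ => (hderiv u).hasDerivWithinAt) (fun u _ => hbound u)
    (convex_Icc 0 t) (Set.left_mem_Icc.2 ht) (Set.right_mem_Icc.2 ht)
  have ht0 : h t = B * exp ((t : ℂ) • A) := by
    simp [hh]
  have h00 : h 0 = exp ((t : ℂ) • A) * B := by
    simp [hh]
  rw [ht0, h00] at key
  simpa [abs_of_nonneg ht, mul_comm] using key

end TrotterAux

open Matrix
open scoped Matrix.Norms.L2Operator

/-- First-order Trotter error bound: for anti-Hermitian matrices `A`, `B` and
`x ≥ 0`, `‖e^{x(A+B)} − e^{xA}e^{xB}‖ ≤ (x²/2)·‖[A,B]‖`. -/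
theorem trotter_first_order_bound (n : ℕ) (A B : Matrix (Fin n) (Fin n) ℂ)
    (hA : Aᴴ = -A) (hB : Bᴴ = -B) (x : ℝ) (hx : 0 ≤ x) :
    ‖NormedSpace.exp ((x : ℂ) • (A + B)) -
        NormedSpace.exp ((x : ℂ) • A) * NormedSpace.exp ((x : ℂ) • B)‖ ≤
      x ^ 2 / 2 * ‖A * B - B * A‖ := by
  have hAB : (A + B)ᴴ = -(A + B) := by rw [conjTranspose_add, hA, hB]; abel
  set f : ℝ → Matrix (Fin n) (Fin n) ℂ := fun s =>
    exp ((s : ℂ) • (A + B)) * (exp ((↑(x - s) : ℂ) • A) * exp ((↑(x - s) : ℂ) • B))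
    with hf
  set f' : ℝ → Matrix (Fin n) (Fin n) ℂ := fun s =>
    exp ((s : ℂ) • (A + B)) *
      ((B * exp ((↑(x - s) : ℂ) • A) - exp ((↑(x - s) : ℂ) • A) * B) *
        exp ((↑(x - s) : ℂ) • B)) with hf'
  have dsub : ∀ (M : Matrix (Fin n) (Fin n) ℂ) (s : ℝ),
      HasDerivAt (fun v : ℝ => exp ((↑(x - v) : ℂ) • M))
        (-(exp ((↑(x - s) : ℂ) • M) * M)) s := by
    intro M s
    have hinner : HasDerivAt (fun v : ℝ => x - v) (-1 : ℝ) s := by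
      simpa using (hasDerivAt_id s).const_sub x
    have h2 := HasDerivAt.scomp s (expDeriv M (x - s)) hinner
    rw [neg_one_smul] at h2
    exact h2
  have hderiv : ∀ s : ℝ, HasDerivAt f (f' s) s := by
    intro s
    have dE := expDeriv (A + B) s
    have dP := dsub A s
    have dQ := dsub B s
    have d := dE.mul (dP.mul dQ)
    refine d.congr_deriv ?_
    symm
    have hcA : exp ((↑(x - s) : ℂ) • A) * A = A * exp ((↑(x - s) : ℂ) • A) :=
      (((Commute.refl A).smul_right ((↑(x - s) : ℂ))).exp_right).eq.symm
    have hcB : exp ((↑(x - s) : ℂ) • B) * B = B * exp ((↑(x - s) : ℂ) • B) :=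
      (((Commute.refl B).smul_right ((↑(x - s) : ℂ))).exp_right).eq.symm
    simp only [hf', Pi.mul_apply]
    rw [hcA, hcB]
    noncomm_ring
  have hbound : ∀ s ∈ Set.Ioc 0 x, ‖f' s‖ ≤ (x - s) * ‖A * B - B * A‖ := by
    intro s hs
    have e1 := norm_exp_smul_skew (A + B) hAB s
    have e2 := norm_exp_smul_skew B hB (x - s)
    have e3 := comm_exp_bound A B hA (x - s) (by linarith [hs.2])
    calc ‖f' s‖ ≤ ‖exp ((s : ℂ) • (A + B))‖ *
          ‖(B * exp ((↑(x - s) : ℂ) • A) - exp ((↑(x - s) : ℂ) • A) * B) *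
            exp ((↑(x - s) : ℂ) • B)‖ := norm_mul_le _ _
      _ ≤ ‖(B * exp ((↑(x - s) : ℂ) • A) - exp ((↑(x - s) : ℂ) • A) * B) *
            exp ((↑(x - s) : ℂ) • B)‖ := mul_le_of_le_one_left (norm_nonneg _) e1
      _ ≤ ‖B * exp ((↑(x - s) : ℂ) • A) - exp ((↑(x - s) : ℂ) • A) * B‖ *
            ‖exp ((↑(x - s) : ℂ) • B)‖ := norm_mul_le _ _
      _ ≤ ‖B * exp ((↑(x - s) : ℂ) • A) - exp ((↑(x - s) : ℂ) • A) * B‖ :=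
            mul_le_of_le_one_right (norm_nonneg _) e2
      _ ≤ (x - s) * ‖A * B - B * A‖ := e3
  -- continuity of f'
  have cexp : ∀ M : Matrix (Fin n) (Fin n) ℂ, Continuous (fun s : ℝ => exp ((s : ℂ) • M)) :=
    fun M => continuous_iff_continuousAt.2 fun s => (expDeriv M s).continuousAt
  have csub : ∀ M : Matrix (Fin n) (Fin n) ℂ,
      Continuous (fun s : ℝ => exp ((↑(x - s) : ℂ) • M)) :=
    fun M => (cexp M).comp (continuous_const.sub continuous_id)
  have hcont : Continuous f' := by
    apply Continuous.mul (cexp (A + B))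
    exact (((continuous_const.mul (csub A)).sub ((csub A).mul continuous_const)).mul (csub B))
  have hint : IntervalIntegrable f' MeasureTheory.volume 0 x :=
    hcont.intervalIntegrable _ _
  have hftc : ∫ s in (0:ℝ)..x, f' s = f x - f 0 :=
    intervalIntegral.integral_eq_sub_of_hasDerivAt (fun s _ => hderiv s) hint
  have hfx : f x = exp ((x : ℂ) • (A + B)) := by
    simp [hf]
  have hf0 : f 0 = exp ((x : ℂ) • A) * exp ((x : ℂ) • B) := by
    simp [hf]
  have hgint : IntervalIntegrable (fun s => (x - s) * ‖A * B - B * A‖)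
      MeasureTheory.volume 0 x :=
    (Continuous.mul (continuous_const.sub continuous_id) continuous_const).intervalIntegrable _ _
  have hle : ‖∫ s in (0:ℝ)..x, f' s‖ ≤ |∫ s in (0:ℝ)..x, (x - s) * ‖A * B - B * A‖| := by
    apply intervalIntegral.norm_integral_le_abs_of_norm_le _ hgint
    have hmem := MeasureTheory.ae_restrict_mem (μ := MeasureTheory.volume)
      (measurableSet_Ioc (a := (0:ℝ)) (b := x))
    rw [Set.uIoc_of_le hx]
    exact hmem.mono fun t ht => hbound t ht
  have hval : ∫ s in (0:ℝ)..x, (x - s) * ‖A * B - B * A‖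
      = (x * x - x ^ 2 / 2) * ‖A * B - B * A‖ := by
    rw [intervalIntegral.integral_mul_const]
    congr 1
    rw [intervalIntegral.integral_sub (intervalIntegrable_const) intervalIntegral.intervalIntegrable_id,
      intervalIntegral.integral_const, integral_id]
    simp
  rw [hfx, hf0] at hftc
  rw [← hftc]
  refine hle.trans ?_
  rw [hval, abs_of_nonneg (by nlinarith [norm_nonneg (A * B - B * A)])]
  nlinarith [norm_nonneg (A * B - B * A)]
end

section
/- For α > 1, there is a constant p (one may take p = 2^{α+1}(2ζ(α)−1)) such that for all integers j₁, j₂, ∑_{j∈ℤ} (1+|j₁−j|)^{−α} (1+|j−j₂|)^{−α} ≤ p·(1+|j₁−j₂|)^{−α}. -/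
open Real

private lemma pl_summable_base (α : ℝ) (hα : 1 < α) :
    Summable (fun j : ℤ => ((1 + |j| : ℤ) : ℝ) ^ (-α)) := by
  have hSnat : Summable (fun n : ℕ => ((n : ℝ) + 1) ^ (-α)) := by
    have h := (Real.summable_nat_rpow (p := -α)).mpr (by linarith)
    have h2 := (summable_nat_add_iff 1).mpr h
    convert h2 using 2 with n
    · rfl
    push_cast; ring_nf
  apply Summable.of_nat_of_neg
  · convert hSnat using 2 with n
    · rfl
    simp [Int.abs_natCast]; ring_nf
  · convert hSnat using 2 with n
    · rfl
    simp [abs_neg, Int.abs_natCast]; ring_nf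

/-- Reproducing (convolution) property of power-law decay: for `α > 1` there is
a constant `p` such that for all integers `j₁, j₂`,
`∑_{j∈ℤ} (1+|j₁−j|)^{−α} (1+|j−j₂|)^{−α} ≤ p (1+|j₁−j₂|)^{−α}`. -/
theorem powerLaw_convolution_bound (α : ℝ) (hα : 1 < α) :
    ∃ p : ℝ, ∀ j₁ j₂ : ℤ,
      (∑' j : ℤ, ((1 + |j₁ - j| : ℤ) : ℝ) ^ (-α) * ((1 + |j - j₂| : ℤ) : ℝ) ^ (-α)) ≤
        p * ((1 + |j₁ - j₂| : ℤ) : ℝ) ^ (-α) := by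
  set base : ℤ → ℝ := fun j => ((1 + |j| : ℤ) : ℝ) ^ (-α) with hbase
  have hbpos : ∀ j : ℤ, 0 < base j := by
    intro j
    apply Real.rpow_pos_of_pos
    have : (0:ℤ) < 1 + |j| := by positivity
    exact_mod_cast this
  have hble : ∀ j : ℤ, base j ≤ 1 := by
    intro j
    apply Real.rpow_le_one_of_one_le_of_nonpos
    · have : (1:ℤ) ≤ 1 + |j| := le_add_of_nonneg_right (abs_nonneg j)
      exact_mod_cast this
    · linarith
  have hS : Summable base := pl_summable_base α hα
  set S := ∑' j, base j with hSdef
  refine ⟨2 ^ α * (2 * S), fun j₁ j₂ => ?_⟩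
  set D : ℝ := ((1 + |j₁ - j₂| : ℤ) : ℝ) ^ (-α) with hD
  have hDb : D = base (j₁ - j₂) := rfl
  have hDpos : 0 < D := hDb ▸ hbpos _
  -- summability of the shifted families
  have ha : Summable (fun j : ℤ => base (j₁ - j)) :=
    ((Equiv.subLeft j₁).summable_iff (f := base)).mpr hS
  have hb : Summable (fun j : ℤ => base (j - j₂)) :=
    ((Equiv.subRight j₂).summable_iff (f := base)).mpr hS
  have hta : (∑' j : ℤ, base (j₁ - j)) = S := (Equiv.subLeft j₁).tsum_eq base
  have htb : (∑' j : ℤ, base (j - j₂)) = S := (Equiv.subRight j₂).tsum_eq base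
  have hprod : Summable (fun j : ℤ => base (j₁ - j) * base (j - j₂)) := by
    apply hb.of_nonneg_of_le
    · intro j; positivity
    · intro j
      exact mul_le_of_le_one_left (hbpos _).le (hble _)
  -- key pointwise estimate
  have hkey : ∀ j : ℤ, base (j₁ - j) * base (j - j₂) ≤
      2 ^ α * D * (base (j₁ - j) + base (j - j₂)) := by
    intro j
    have htri : |j₁ - j₂| ≤ |j₁ - j| + |j - j₂| := by
      have := abs_add_le (j₁ - j) (j - j₂)
      simpa using this
    -- one of the two distances is at least half the total
    have key : ∀ m : ℤ, |j₁ - j₂| ≤ 2 * m → 0 ≤ m →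
        ((1 + m : ℤ) : ℝ) ^ (-α) ≤ 2 ^ α * D := by
      intro m hm hm0
      have h1 : ((1 + |j₁ - j₂| : ℤ) : ℝ) / 2 ≤ ((1 + m : ℤ) : ℝ) := by
        have hint : (1 + |j₁ - j₂| : ℤ) ≤ 2 * (1 + m) := by omega
        have hr : ((1 + |j₁ - j₂| : ℤ) : ℝ) ≤ ((2 * (1 + m) : ℤ) : ℝ) := by exact_mod_cast hint
        push_cast at hr ⊢
        linarith
      have h2 : (0:ℝ) < ((1 + |j₁ - j₂| : ℤ) : ℝ) / 2 := by
        have hint : (0:ℤ) < 1 + |j₁ - j₂| := by positivity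
        have hr : (0:ℝ) < ((1 + |j₁ - j₂| : ℤ) : ℝ) := by exact_mod_cast hint
        linarith
      calc ((1 + m : ℤ) : ℝ) ^ (-α)
          ≤ (((1 + |j₁ - j₂| : ℤ) : ℝ) / 2) ^ (-α) :=
            Real.rpow_le_rpow_of_nonpos h2 h1 (by linarith)
        _ = 2 ^ α * D := by
            rw [Real.div_rpow (by positivity) (by norm_num), hD,
              Real.rpow_neg (by norm_num : (0:ℝ) ≤ 2), div_eq_mul_inv, inv_inv]
            ring
    rcases le_or_gt (|j₁ - j₂|) (2 * |j₁ - j|) with hc | hc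
    · have h3 : base (j₁ - j) ≤ 2 ^ α * D := key _ hc (abs_nonneg _)
      have hb1 := hbpos (j - j₂)
      have ha1 := (hbpos (j₁ - j)).le
      nlinarith [mul_le_mul_of_nonneg_right h3 hb1.le]
    · have hc2 : |j₁ - j₂| ≤ 2 * |j - j₂| := by omega
      have h3 : base (j - j₂) ≤ 2 ^ α * D := key _ hc2 (abs_nonneg _)
      have ha1 := hbpos (j₁ - j)
      have hb1 := (hbpos (j - j₂)).le
      nlinarith [mul_le_mul_of_nonneg_left h3 ha1.le]
  have hsum2 : Summable (fun j : ℤ => 2 ^ α * D * (base (j₁ - j) + base (j - j₂))) :=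
    (ha.add hb).mul_left _
  calc (∑' j : ℤ, ((1 + |j₁ - j| : ℤ) : ℝ) ^ (-α) * ((1 + |j - j₂| : ℤ) : ℝ) ^ (-α))
      = ∑' j : ℤ, base (j₁ - j) * base (j - j₂) := rfl
    _ ≤ ∑' j : ℤ, 2 ^ α * D * (base (j₁ - j) + base (j - j₂)) :=
        Summable.tsum_le_tsum hkey hprod hsum2
    _ = 2 ^ α * D * (S + S) := by
        rw [tsum_mul_left, Summable.tsum_add ha hb, hta, htb]
    _ = 2 ^ α * (2 * S) * D := by ring
end

section
/- For finitely many positive probabilities p_i depending smoothly on time and summing to 1, the total variation distance satisfies 2·d(p(0), p(τ)) ≤ ∫₀^τ √(∑_i (dp_i/dt)²/p_i(t)) dt, i.e., the classical speed limit bound τ ≥ 2 d(p(0),p(τ)) / (time-averaged √Fisher information). -/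
/-- Classical speed limit: for a smooth curve `p(t)` of positive probability
distributions on a finite set, the total variation distance satisfies
`2 d(p(0), p(τ)) ≤ ∫₀^τ √(∑ᵢ (dpᵢ/dt)²/pᵢ) dt`. -/
theorem classical_speed_limit_total_variation (N : ℕ)
    (p p' : ℝ → Fin N → ℝ) (τ : ℝ) (hτ : 0 ≤ τ)
    (hderiv : ∀ i t, HasDerivAt (fun s => p s i) (p' t i) t)
    (hcont : ∀ i, Continuous fun t => p' t i)
    (hpos : ∀ t i, 0 < p t i)
    (hsum : ∀ t, ∑ i, p t i = 1) :
    2 * ((1 / 2) * ∑ i, |p 0 i - p τ i|) ≤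
      ∫ t in (0 : ℝ)..τ, Real.sqrt (∑ i, (p' t i) ^ 2 / p t i) := by
  have hpc : ∀ i, Continuous fun t => p t i := fun i =>
    continuous_iff_continuousAt.2 fun t => (hderiv i t).continuousAt
  have hint : ∀ i, IntervalIntegrable (fun t => p' t i) MeasureTheory.volume 0 τ :=
    fun i => (hcont i).intervalIntegrable 0 τ
  have hintabs : ∀ i, IntervalIntegrable (fun t => |p' t i|) MeasureTheory.volume 0 τ :=
    fun i => ((hcont i).abs).intervalIntegrable 0 τ
  have hsqrtcont : Continuous fun t => Real.sqrt (∑ i, (p' t i) ^ 2 / p t i) := by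
    apply Real.continuous_sqrt.comp
    exact continuous_finset_sum _ fun i _ =>
      (((hcont i).pow 2).div (hpc i) fun t => (hpos t i).ne')
  have hintsqrt : IntervalIntegrable (fun t => Real.sqrt (∑ i, (p' t i) ^ 2 / p t i))
      MeasureTheory.volume 0 τ := hsqrtcont.intervalIntegrable 0 τ
  -- pointwise Cauchy-Schwarz bound
  have hpt : ∀ t, ∑ i, |p' t i| ≤ Real.sqrt (∑ i, (p' t i) ^ 2 / p t i) := by
    intro t
    rw [Real.le_sqrt (Finset.sum_nonneg fun i _ => abs_nonneg _)]
    have h := Finset.sum_mul_sq_le_sq_mul_sq Finset.univ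
      (fun i => |p' t i| / Real.sqrt (p t i)) (fun i => Real.sqrt (p t i))
    have heq : ∀ i : Fin N, |p' t i| / Real.sqrt (p t i) * Real.sqrt (p t i) = |p' t i| := by
      intro i
      field_simp [Real.sqrt_ne_zero'.2 (hpos t i)]
    have heq2 : ∀ i : Fin N, (|p' t i| / Real.sqrt (p t i)) ^ 2 = (p' t i) ^ 2 / p t i := by
      intro i
      rw [div_pow, sq_abs, Real.sq_sqrt (hpos t i).le]
    have heq3 : ∀ i : Fin N, (Real.sqrt (p t i)) ^ 2 = p t i := fun i =>
      Real.sq_sqrt (hpos t i).le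
    simp only [heq, heq2, heq3] at h
    rw [hsum t, mul_one] at h
    exact h
    exact Finset.sum_nonneg fun i _ => div_nonneg (sq_nonneg _) (hpos t i).le
  calc 2 * ((1 / 2) * ∑ i, |p 0 i - p τ i|) = ∑ i, |p 0 i - p τ i| := by ring
    _ ≤ ∑ i, ∫ t in (0:ℝ)..τ, |p' t i| := by
        apply Finset.sum_le_sum
        intro i _
        have hftc : (∫ t in (0:ℝ)..τ, p' t i) = p τ i - p 0 i :=
          intervalIntegral.integral_eq_sub_of_hasDerivAt
            (fun t _ => hderiv i t) (hint i)
        have : |p 0 i - p τ i| = |∫ t in (0:ℝ)..τ, p' t i| := by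
          rw [hftc, abs_sub_comm]
        rw [this]
        exact intervalIntegral.abs_integral_le_integral_abs hτ
    _ = ∫ t in (0:ℝ)..τ, ∑ i, |p' t i| := by
        rw [intervalIntegral.integral_finset_sum]
        exact fun i _ => hintabs i
    _ ≤ ∫ t in (0:ℝ)..τ, Real.sqrt (∑ i, (p' t i) ^ 2 / p t i) := by
        apply intervalIntegral.integral_mono_on hτ
          ((continuous_finset_sum Finset.univ fun i _ => (hcont i).abs).intervalIntegrable 0 τ) hintsqrt
        intro t _
        exact hpt t
end

section
/- For a time-dependent probability distribution (p_i(t)) on a finite set and a fixed observable A = (a_i), the speed of the expectation value satisfies |d⟨A⟩/dt| ≤ σ_A · √F_c, where σ_A is the standard deviation of A under p(t) and F_c = ∑_i p_i (d ln p_i/dt)² is the classical Fisher information (Cramér-Rao type speed limit). -/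
/-- Cramér–Rao type classical speed limit: for a time-dependent probability
distribution `p(t)` on a finite set and a fixed observable `A = (aᵢ)`,
`|d⟨A⟩/dt| ≤ σ_A √F_c`, with `σ_A` the standard deviation of `A` under `p(t)`
and `F_c = ∑ᵢ (dpᵢ/dt)²/pᵢ` the classical Fisher information. -/
theorem classical_cramer_rao_speed_limit (N : ℕ)
    (p p' : ℝ → Fin N → ℝ) (a : Fin N → ℝ) (t : ℝ)
    (hderiv : ∀ i s, HasDerivAt (fun u => p u i) (p' s i) s)
    (hpos : ∀ s i, 0 < p s i)
    (hsum : ∀ s, ∑ i, p s i = 1) :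
    |∑ i, a i * p' t i| ≤
      Real.sqrt ((∑ i, p t i * (a i) ^ 2) - (∑ i, p t i * a i) ^ 2) *
        Real.sqrt (∑ i, (p' t i) ^ 2 / p t i) := by
  -- derivative of the total probability vanishes
  have hz : ∑ i, p' t i = 0 := by
    have h1 : HasDerivAt (fun u => ∑ i, p u i) (∑ i, p' t i) t :=
      HasDerivAt.fun_sum (fun i _ => hderiv i t)
    have h2 : HasDerivAt (fun u : ℝ => ∑ i, p u i) 0 t := by
      have : (fun u : ℝ => ∑ i, p u i) = fun _ => (1 : ℝ) := by
        funext u; exact hsum u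
      rw [this]; exact hasDerivAt_const t 1
    exact h1.unique h2
  set m : ℝ := ∑ i, p t i * a i with hm
  have hrw : ∑ i, a i * p' t i = ∑ i, (a i - m) * p' t i := by
    simp only [sub_mul, Finset.sum_sub_distrib, ← Finset.mul_sum, hz, mul_zero, sub_zero]
  set f : Fin N → ℝ := fun i => (a i - m) * Real.sqrt (p t i) with hf
  set g : Fin N → ℝ := fun i => p' t i / Real.sqrt (p t i) with hg
  have hfg : ∀ i, (a i - m) * p' t i = f i * g i := by
    intro i
    have hsp : Real.sqrt (p t i) ≠ 0 :=
      ne_of_gt (Real.sqrt_pos.2 (hpos t i))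
    simp only [hf, hg]
    field_simp
  have hf2 : ∑ i, f i ^ 2 = (∑ i, p t i * (a i) ^ 2) - m ^ 2 := by
    have he : ∀ i, f i ^ 2 = p t i * (a i) ^ 2 - 2 * m * (p t i * a i) + m ^ 2 * p t i := by
      intro i
      have hs : Real.sqrt (p t i) ^ 2 = p t i := Real.sq_sqrt (hpos t i).le
      simp only [hf, mul_pow, hs]; ring
    rw [Finset.sum_congr rfl (fun i _ => he i)]
    simp only [Finset.sum_add_distrib, Finset.sum_sub_distrib, ← Finset.mul_sum, hsum t, ← hm]
    ring
  have hg2 : ∑ i, g i ^ 2 = ∑ i, (p' t i) ^ 2 / p t i := by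
    apply Finset.sum_congr rfl
    intro i _
    rw [hg, div_pow, Real.sq_sqrt (hpos t i).le]
  have key : |∑ i, f i * g i| ≤
      Real.sqrt (∑ i, f i ^ 2) * Real.sqrt (∑ i, g i ^ 2) := by
    rw [abs_le]
    constructor
    · rw [neg_le, ← Finset.sum_neg_distrib]
      calc ∑ i, -(f i * g i) = ∑ i, (-f i) * g i := by
            exact Finset.sum_congr rfl fun i _ => (neg_mul (f i) (g i)).symm
        _ ≤ Real.sqrt (∑ i, (-f i) ^ 2) * Real.sqrt (∑ i, g i ^ 2) :=
            Real.sum_mul_le_sqrt_mul_sqrt Finset.univ (fun i => -f i) g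
        _ = Real.sqrt (∑ i, f i ^ 2) * Real.sqrt (∑ i, g i ^ 2) := by
            congr 2; exact Finset.sum_congr rfl fun i _ => neg_sq (f i)
    · exact Real.sum_mul_le_sqrt_mul_sqrt Finset.univ f g
  calc |∑ i, a i * p' t i| = |∑ i, f i * g i| := by
        rw [hrw, Finset.sum_congr rfl (fun i _ => hfg i)]
    _ ≤ Real.sqrt (∑ i, f i ^ 2) * Real.sqrt (∑ i, g i ^ 2) := key
    _ = _ := by rw [hf2, hg2]
end

section
/- For a Markov chain satisfying detailed balance with rates W_{ij} ≥ 0 for i≠j and current distribution p, the total probability speed obeys ∑_i |∑_j W_{ij} p_j| ≤ √(2·A·Σ̇), where A = ∑_{i≠j} W_{ij} p_j is the dynamical activity and Σ̇ = (1/2)∑_{i≠j} (W_{ij}p_j − W_{ji}p_i)·ln(W_{ij}p_j/(W_{ji}p_i)) is the entropy production rate. -/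
/-- `(t+1)·log t ≥ 2(t-1)` for `t ≥ 1`. -/
private lemma logmean_aux {t : ℝ} (ht : 1 ≤ t) : 2 * (t - 1) ≤ (t + 1) * Real.log t := by
  set g : ℝ → ℝ := fun x => (x + 1) * Real.log x - 2 * (x - 1) with hg
  have hderiv : ∀ x ∈ Set.Ioi (1:ℝ),
      HasDerivAt g (Real.log x + (x + 1) * x⁻¹ - 2) x := by
    intro x hx
    have hx0 : (0:ℝ) < x := lt_trans one_pos hx
    have h1 : HasDerivAt (fun x : ℝ => (x + 1) * Real.log x)
        (1 * Real.log x + (x + 1) * x⁻¹) x :=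
      (((hasDerivAt_id x).add_const 1)).mul (Real.hasDerivAt_log hx0.ne')
    have h2 : HasDerivAt (fun x : ℝ => 2 * (x - 1)) 2 x := by
      simpa using ((hasDerivAt_id x).sub_const 1).const_mul 2
    have := h1.sub h2
    refine this.congr_deriv ?_
    ring
  have hmono : MonotoneOn g (Set.Ici (1:ℝ)) := by
    apply monotoneOn_of_deriv_nonneg (convex_Ici 1)
    · apply ContinuousOn.sub
      · exact ContinuousOn.mul (by fun_prop)
          (Real.continuousOn_log.mono (by intro x hx; simp at hx ⊢; positivity))
      · fun_prop
    · intro x hx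
      rw [interior_Ici] at hx
      exact (hderiv x hx).differentiableAt.differentiableWithinAt
    · intro x hx
      rw [interior_Ici] at hx
      rw [(hderiv x hx).deriv]
      have hx0 : (0:ℝ) < x := lt_trans one_pos hx
      have hlog : 1 - x⁻¹ ≤ Real.log x := Real.one_sub_inv_le_log_of_pos hx0
      have hxx : x * x⁻¹ = 1 := mul_inv_cancel₀ hx0.ne'
      nlinarith
  have h1 : g 1 ≤ g t := hmono (by simp) ht ht
  have hg1 : g 1 = 0 := by simp [hg]
  have := hg1 ▸ h1
  simp only [hg] at this
  linarith

/-- Log-mean vs arithmetic mean: `2(a-b)² ≤ (a+b)·(a-b)·log(a/b)` for positive `a b`. -/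
private lemma logmean_half {a b : ℝ} (ha : 0 < a) (hb : 0 < b) (hab : b ≤ a) :
    2 * (a - b) ^ 2 ≤ (a + b) * ((a - b) * Real.log (a / b)) := by
  have ht : 1 ≤ a / b := (one_le_div hb).mpr hab
  have h := logmean_aux ht
  have e : a / b * b = a := div_mul_cancel₀ a hb.ne'
  have h2 : 2 * (a - b) ≤ (a + b) * Real.log (a / b) := by
    have := mul_le_mul_of_nonneg_right h hb.le
    nlinarith
  nlinarith [mul_le_mul_of_nonneg_right h2 (sub_nonneg.mpr hab),
    mul_self_nonneg (a - b)]

private lemma logmean_full {a b : ℝ} (ha : 0 < a) (hb : 0 < b) :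
    2 * (a - b) ^ 2 ≤ (a + b) * ((a - b) * Real.log (a / b)) := by
  rcases le_total b a with h | h
  · exact logmean_half ha hb h
  · have hh := logmean_half hb ha h
    have hlog : Real.log (a / b) = - Real.log (b / a) := by
      rw [← Real.log_inv]
      congr 1
      rw [inv_div]
    rw [hlog]
    nlinarith [hh]

private lemma logmean_nonneg {a b : ℝ} (ha : 0 < a) (hb : 0 < b) :
    0 ≤ (a - b) * Real.log (a / b) := by
  nlinarith [logmean_full ha hb, sq_nonneg (a - b)]

/-- Speed limit for classical Markov jump dynamics with detailed balance:
`∑ᵢ |ṗᵢ| ≤ √(2·A·Σ̇)`, where `A` is the dynamical activity and `Σ̇` the entropy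
production rate. -/
theorem markov_speed_limit_activity_entropy (ι : Type*) [Fintype ι] [DecidableEq ι]
    (W : ι → ι → ℝ) (p : ι → ℝ) (β : ℝ) (Energy : ι → ℝ)
    (hW : ∀ i j, i ≠ j → 0 < W i j)
    (hcons : ∀ j, ∑ i, W i j = 0)
    (hdb : ∀ i j, W i j * Real.exp (-β * Energy j) = W j i * Real.exp (-β * Energy i))
    (hp : ∀ i, 0 < p i) (hpsum : ∑ i, p i = 1) :
    ∑ i, |∑ j, W i j * p j| ≤
      Real.sqrt (2 * (∑ q ∈ Finset.univ.offDiag, W q.1 q.2 * p q.2) *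
        ((1 / 2) * ∑ q ∈ Finset.univ.offDiag,
          (W q.1 q.2 * p q.2 - W q.2 q.1 * p q.1) *
            Real.log (W q.1 q.2 * p q.2 / (W q.2 q.1 * p q.1)))) := by
  classical
  set a : ι × ι → ℝ := fun q => W q.1 q.2 * p q.2 with ha
  set b : ι × ι → ℝ := fun q => W q.2 q.1 * p q.1 with hb
  have hapos : ∀ q ∈ Finset.univ.offDiag, 0 < a q := by
    intro q hq
    rw [Finset.mem_offDiag] at hq
    exact mul_pos (hW _ _ hq.2.2) (hp _)
  have hbpos : ∀ q ∈ Finset.univ.offDiag, 0 < b q := by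
    intro q hq
    rw [Finset.mem_offDiag] at hq
    exact mul_pos (hW _ _ hq.2.2.symm) (hp _)
  -- rewrite offDiag sums as double sums over erased sets
  have hoff : ∀ g : ι → ι → ℝ,
      ∑ q ∈ Finset.univ.offDiag, g q.1 q.2 = ∑ i, ∑ j ∈ Finset.univ.erase i, g i j := by
    intro g
    have h1 : Finset.univ.offDiag
        = (Finset.univ ×ˢ Finset.univ).filter (fun q : ι × ι => q.1 ≠ q.2) := by
      ext q; simp [Finset.mem_offDiag]
    rw [h1, Finset.sum_filter, Finset.sum_product]
    refine Finset.sum_congr rfl fun i _ => ?_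
    have h2 : Finset.univ.erase i = Finset.univ.filter (fun j => i ≠ j) := by
      ext j; simp [ne_comm]
    rw [h2, Finset.sum_filter]
  -- p-dot as a sum of currents
  have hdot : ∀ i, ∑ j, W i j * p j
      = ∑ j ∈ Finset.univ.erase i, (W i j * p j - W j i * p i) := by
    intro i
    rw [Finset.sum_sub_distrib, ← Finset.sum_mul]
    have h1 : ∑ j, W i j * p j
        = W i i * p i + ∑ j ∈ Finset.univ.erase i, W i j * p j :=
      (Finset.add_sum_erase _ _ (Finset.mem_univ i)).symm
    have h2 : ∑ j ∈ Finset.univ.erase i, W j i = - W i i := by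
      have h := hcons i
      rw [← Finset.add_sum_erase _ (fun j => W j i) (Finset.mem_univ i)] at h
      linarith
    rw [h1, h2]; ring
  -- Step 1 : triangle inequality
  have step1 : ∑ i, |∑ j, W i j * p j| ≤ ∑ q ∈ Finset.univ.offDiag, |a q - b q| := by
    rw [hoff (fun i j => |W i j * p j - W j i * p i|)]
    refine Finset.sum_le_sum fun i _ => ?_
    rw [hdot i]
    exact Finset.abs_sum_le_sum_abs _ _
  -- Step 2 : pointwise bound  |a-b| ≤ √(a+b) · √((1/2)(a-b)log(a/b))
  set x : ι × ι → ℝ := fun q => a q + b q with hx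
  set y : ι × ι → ℝ := fun q => (1 / 2) * ((a q - b q) * Real.log (a q / b q)) with hy
  have hxnn : ∀ q ∈ Finset.univ.offDiag, 0 ≤ x q := fun q hq =>
    le_of_lt (add_pos (hapos q hq) (hbpos q hq))
  have hynn : ∀ q ∈ Finset.univ.offDiag, 0 ≤ y q := fun q hq => by
    have := logmean_nonneg (hapos q hq) (hbpos q hq)
    simp only [hy]; linarith
  have step2 : ∀ q ∈ Finset.univ.offDiag,
      |a q - b q| ≤ Real.sqrt (x q) * Real.sqrt (y q) := by
    intro q hq
    rw [← Real.sqrt_mul (hxnn q hq)]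
    have key : (a q - b q) ^ 2 ≤ x q * y q := by
      have := logmean_full (hapos q hq) (hbpos q hq)
      simp only [hx, hy]; nlinarith
    calc |a q - b q| = Real.sqrt ((a q - b q) ^ 2) := by
          rw [Real.sqrt_sq_eq_abs]
      _ ≤ Real.sqrt (x q * y q) := Real.sqrt_le_sqrt key
  -- Step 3 : Cauchy–Schwarz
  have hXnn : (0:ℝ) ≤ ∑ q ∈ Finset.univ.offDiag, x q := Finset.sum_nonneg hxnn
  have hYnn : (0:ℝ) ≤ ∑ q ∈ Finset.univ.offDiag, y q := Finset.sum_nonneg hynn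
  have step3 : ∑ q ∈ Finset.univ.offDiag, Real.sqrt (x q) * Real.sqrt (y q)
      ≤ Real.sqrt ((∑ q ∈ Finset.univ.offDiag, x q) * (∑ q ∈ Finset.univ.offDiag, y q)) := by
    rw [Real.le_sqrt (Finset.sum_nonneg fun q _ => mul_nonneg (Real.sqrt_nonneg _)
      (Real.sqrt_nonneg _)) (mul_nonneg hXnn hYnn)]
    calc (∑ q ∈ Finset.univ.offDiag, Real.sqrt (x q) * Real.sqrt (y q)) ^ 2
        ≤ (∑ q ∈ Finset.univ.offDiag, Real.sqrt (x q) ^ 2)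
          * ∑ q ∈ Finset.univ.offDiag, Real.sqrt (y q) ^ 2 :=
          Finset.sum_mul_sq_le_sq_mul_sq _ _ _
      _ = (∑ q ∈ Finset.univ.offDiag, x q) * (∑ q ∈ Finset.univ.offDiag, y q) := by
          rw [Finset.sum_congr rfl fun q hq => Real.sq_sqrt (hxnn q hq),
            Finset.sum_congr rfl fun q hq => Real.sq_sqrt (hynn q hq)]
  -- identify the sums
  have hswap : ∑ q ∈ Finset.univ.offDiag, b q = ∑ q ∈ Finset.univ.offDiag, a q := by
    refine Finset.sum_nbij' (fun q => Prod.swap q) (fun q => Prod.swap q) ?_ ?_ ?_ ?_ ?_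
    · intro q hq; rw [Finset.mem_offDiag] at hq ⊢; exact ⟨hq.2.1, hq.1, hq.2.2.symm⟩
    · intro q hq; rw [Finset.mem_offDiag] at hq ⊢; exact ⟨hq.2.1, hq.1, hq.2.2.symm⟩
    · intro q _; simp
    · intro q _; simp
    · intro q _; simp [ha, hb]
  have hX : ∑ q ∈ Finset.univ.offDiag, x q
      = 2 * ∑ q ∈ Finset.univ.offDiag, a q := by
    simp only [hx]
    rw [Finset.sum_add_distrib, hswap]; ring
  have hY : ∑ q ∈ Finset.univ.offDiag, y q
      = (1 / 2) * ∑ q ∈ Finset.univ.offDiag,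
          ((a q - b q) * Real.log (a q / b q)) := by
    simp only [hy]
    rw [Finset.mul_sum]
  calc ∑ i, |∑ j, W i j * p j|
      ≤ ∑ q ∈ Finset.univ.offDiag, |a q - b q| := step1
    _ ≤ ∑ q ∈ Finset.univ.offDiag, Real.sqrt (x q) * Real.sqrt (y q) :=
        Finset.sum_le_sum step2
    _ ≤ Real.sqrt ((∑ q ∈ Finset.univ.offDiag, x q) * (∑ q ∈ Finset.univ.offDiag, y q)) :=
        step3
    _ = _ := by rw [hX, hY]
end

section
/- For positive reals x and y, (x − y)² ≤ (1/2)(x² − y²)·ln(x/y). -/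
lemma log_lower_aux (t : ℝ) (ht : 1 ≤ t) : 2 * (t - 1) / (t + 1) ≤ Real.log t := by
  have hmono : MonotoneOn (fun u : ℝ => Real.log u - 2 * (u - 1) / (u + 1)) (Set.Ici 1) := by
    have hderiv : ∀ s ∈ interior (Set.Ici (1:ℝ)), HasDerivAt
        (fun u : ℝ => Real.log u - 2 * (u - 1) / (u + 1))
        (s⁻¹ - (2 * 1 * (s + 1) - 2 * (s - 1) * 1) / (s + 1) ^ 2) s := by
      intro s hs
      rw [interior_Ici] at hs
      have hs1 : (1:ℝ) < s := hs
      have hs0 : s ≠ 0 := by linarith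
      have hs1' : s + 1 ≠ 0 := by linarith
      exact (Real.hasDerivAt_log hs0).sub
        ((((hasDerivAt_id s).sub_const 1).const_mul 2).div
          ((hasDerivAt_id s).add_const 1) hs1')
    apply monotoneOn_of_deriv_nonneg (convex_Ici 1)
    · apply ContinuousOn.sub
      · exact Real.continuousOn_log.mono (by intro u hu; simp at hu ⊢; linarith)
      · apply ContinuousOn.div (by fun_prop) (by fun_prop)
        intro u hu; simp at hu; intro h; linarith
    · intro s hs
      exact (hderiv s hs).differentiableAt.differentiableWithinAt
    · intro s hs
      rw [(hderiv s hs).deriv]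
      rw [interior_Ici] at hs
      have hs1 : (1:ℝ) < s := hs
      rw [sub_nonneg]
      rw [div_le_iff₀ (by positivity), inv_eq_one_div, div_mul_eq_mul_div, le_div_iff₀ (by linarith)]
      nlinarith [sq_nonneg (s - 1)]
  have h1 : (fun u : ℝ => Real.log u - 2 * (u - 1) / (u + 1)) 1 ≤
      (fun u : ℝ => Real.log u - 2 * (u - 1) / (u + 1)) t :=
    hmono (Set.self_mem_Ici) ht ht
  simp [Real.log_one] at h1
  linarith [h1]

lemma key_case (x y : ℝ) (hx : 0 < x) (hy : 0 < y) (hxy : y ≤ x) :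
    (x - y) ^ 2 ≤ (1 / 2) * (x ^ 2 - y ^ 2) * Real.log (x / y) := by
  have ht : 1 ≤ x / y := (le_div_iff₀ hy).2 (by linarith)
  have h1 : 2 * (x / y - 1) / (x / y + 1) ≤ Real.log (x / y) := log_lower_aux _ ht
  have h2 : 2 * (x / y - 1) / (x / y + 1) = 2 * (x - y) / (x + y) := by
    rw [div_eq_div_iff (by positivity) (by positivity)]
    field_simp
  rw [h2] at h1
  have hxy2 : 0 ≤ x ^ 2 - y ^ 2 := by nlinarith
  calc (x - y) ^ 2 = (1 / 2) * (x ^ 2 - y ^ 2) * (2 * (x - y) / (x + y)) := by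
        field_simp
        ring
    _ ≤ (1 / 2) * (x ^ 2 - y ^ 2) * Real.log (x / y) := by
        apply mul_le_mul_of_nonneg_left h1
        linarith

/-- For positive reals `x`, `y`: `(x − y)² ≤ (1/2)(x² − y²)·ln(x/y)`. -/
theorem sq_sub_le_half_mul_log (x y : ℝ) (hx : 0 < x) (hy : 0 < y) :
    (x - y) ^ 2 ≤ (1 / 2) * (x ^ 2 - y ^ 2) * Real.log (x / y) := by
  rcases le_total y x with h | h
  · exact key_case x y hx hy h
  · have := key_case y x hy hx h
    have hlog : Real.log (y / x) = -Real.log (x / y) := by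
      rw [← Real.log_inv]
      congr 1
      field_simp
    rw [hlog] at this
    nlinarith [this]
end

section
/- Let H be a self-adjoint operator on a finite-dimensional Hilbert space with ground-state energy E₀, and let Φ be self-adjoint. Then for the ground state |0⟩ and all t ≥ 0, |⟨0|Φ(t)Φ(0)|0⟩ − ⟨0|Φ(0)²|0⟩| ≤ (t/2)·‖[Φ,[H,Φ]]‖, where Φ(t) = e^{iHt}Φe^{−iHt}. -/
open Matrix
open scoped Matrix.Norms.L2Operator

lemma abs_exp_mul_I_sub_one_le (s : ℝ) : ‖Complex.exp (s * Complex.I) - 1‖ ≤ |s| := by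
  have h1 : Complex.exp (s * Complex.I) - 1 =
      Complex.mk (Real.cos s - 1) (Real.sin s) := by
    rw [Complex.exp_mul_I]
    apply Complex.ext <;> simp [Complex.cos_ofReal_re, Complex.sin_ofReal_re]
  rw [h1]
  have h2 : ‖Complex.mk (Real.cos s - 1) (Real.sin s)‖ ^ 2
      = (Real.cos s - 1)^2 + (Real.sin s)^2 := by
    rw [Complex.sq_norm, Complex.normSq_mk]; ring
  have h3 : (Real.cos s - 1)^2 + (Real.sin s)^2 ≤ s ^ 2 := by
    have := Real.sin_sq_add_cos_sq s
    have hc := Real.one_sub_sq_div_two_le_cos (x := s)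
    nlinarith
  nlinarith [norm_nonneg (Complex.mk (Real.cos s - 1) (Real.sin s)), abs_nonneg s,
    sq_abs s]

/-- Watanabe–Oshikawa estimate: for a finite-dimensional Hamiltonian `H` with
ground state `ψ₀` (of ground-state energy `E₀`, the minimum of the spectrum) and
any self-adjoint `Φ`, for all `t ≥ 0`,
`|⟨0|Φ(t)Φ(0)|0⟩ − ⟨0|Φ(0)²|0⟩| ≤ (t/2)·‖[Φ,[H,Φ]]‖`,
where `Φ(t) = e^{iHt} Φ e^{−iHt}`. -/
theorem watanabe_oshikawa_bound (n : ℕ) (H Φ : Matrix (Fin n) (Fin n) ℂ)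
    (hH : H.IsHermitian) (hΦ : Φ.IsHermitian)
    (ψ₀ : Fin n → ℂ) (E₀ : ℝ)
    (hnorm : star ψ₀ ⬝ᵥ ψ₀ = 1)
    (hground : H.mulVec ψ₀ = (E₀ : ℂ) • ψ₀)
    (hmin : ∀ v : Fin n → ℂ, E₀ * (star v ⬝ᵥ v).re ≤ (star v ⬝ᵥ H.mulVec v).re)
    (t : ℝ) (ht : 0 ≤ t) :
    ‖((star ψ₀ ⬝ᵥ (NormedSpace.exp ((Complex.I * t) • H) * Φ *
            NormedSpace.exp ((-(Complex.I * t)) • H) * Φ).mulVec ψ₀) -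
          (star ψ₀ ⬝ᵥ (Φ * Φ).mulVec ψ₀))‖ ≤
      t / 2 * ‖Φ * (H * Φ - Φ * H) - (H * Φ - Φ * H) * Φ‖ := by
  classical
  set μ : Fin n → ℝ := hH.eigenvalues with hμdef
  set U : Matrix (Fin n) (Fin n) ℂ := (hH.eigenvectorUnitary : Matrix (Fin n) (Fin n) ℂ)
    with hUdef
  have hU1 : star U * U = 1 := mem_unitaryGroup_iff'.mp hH.eigenvectorUnitary.2
  have hU2 : U * star U = 1 := mem_unitaryGroup_iff.mp hH.eigenvectorUnitary.2
  set D : Matrix (Fin n) (Fin n) ℂ := diagonal (fun k => (μ k : ℂ)) with hDdef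
  have hspec : H = U * D * star U := hH.spectral_theorem
  -- exponential of c • H
  have hUunit : IsUnit U := ⟨⟨U, star U, hU2, hU1⟩, rfl⟩
  have hUinv : U⁻¹ = star U := inv_eq_right_inv hU2
  have hexp : ∀ c : ℂ, NormedSpace.exp (c • H)
      = U * diagonal (fun k => Complex.exp (c * μ k)) * star U := by
    intro c
    have h1 : c • H = U * (c • D) * U⁻¹ := by
      rw [hUinv, hspec, Matrix.mul_smul, Matrix.smul_mul]
    rw [h1, Matrix.exp_conj U (c • D) hUunit, hUinv]
    congr 2
    rw [hDdef, ← diagonal_smul, Matrix.exp_diagonal]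
    congr 1
    rw [Pi.exp_def]
    funext k
    simp [← Complex.exp_eq_exp_ℂ]
  -- coordinates
  set φ : Fin n → ℂ := Φ *ᵥ ψ₀ with hφdef
  set x : Fin n → ℂ := star U *ᵥ ψ₀ with hxdef
  set y : Fin n → ℂ := star U *ᵥ φ with hydef
  have sx : star x = star ψ₀ ᵥ* U := by
    rw [hxdef, star_mulVec, star_eq_conjTranspose, conjTranspose_conjTranspose]
  have sy : star y = star φ ᵥ* U := by
    rw [hydef, star_mulVec, star_eq_conjTranspose, conjTranspose_conjTranspose]
  have sφ : star φ = star ψ₀ ᵥ* Φ := by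
    rw [hφdef, star_mulVec, hΦ.eq]
  have h1 : ∀ w, star ψ₀ ⬝ᵥ (U *ᵥ w) = star x ⬝ᵥ w := by
    intro w; rw [dotProduct_mulVec, ← sx]
  have h1' : ∀ w, star φ ⬝ᵥ (U *ᵥ w) = star y ⬝ᵥ w := by
    intro w; rw [dotProduct_mulVec, ← sy]
  have h2 : ∀ w, star x ⬝ᵥ (star U *ᵥ w) = star ψ₀ ⬝ᵥ w := by
    intro w; rw [dotProduct_mulVec, sx, vecMul_vecMul, hU2, vecMul_one]
  have h2' : ∀ w, star y ⬝ᵥ (star U *ᵥ w) = star φ ⬝ᵥ w := by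
    intro w; rw [dotProduct_mulVec, sy, vecMul_vecMul, hU2, vecMul_one]
  have h3 : ∀ w, star ψ₀ ⬝ᵥ (Φ *ᵥ w) = star φ ⬝ᵥ w := by
    intro w; rw [dotProduct_mulVec, ← sφ]
  -- eigen relation in coordinates
  have hpt : ∀ k, (μ k : ℂ) * x k = (E₀ : ℂ) * x k := by
    have hDx : D *ᵥ x = (E₀ : ℂ) • x := by
      have : D * star U = star U * H := by
        rw [hspec, ← Matrix.mul_assoc, ← Matrix.mul_assoc, hU1, Matrix.one_mul]
      rw [hxdef, mulVec_mulVec, this, ← mulVec_mulVec, hground, mulVec_smul]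
    intro k
    have := congrFun hDx k
    simpa [hDdef, mulVec_diagonal] using this
  have hconj : ∀ (c : ℂ) k,
      Complex.exp (c * μ k) * (star x) k = Complex.exp (c * E₀) * (star x) k := by
    intro c k
    by_cases hk : x k = 0
    · simp [hk]
    · have hμE : (μ k : ℂ) = (E₀ : ℂ) := mul_right_cancel₀ hk (hpt k)
      rw [hμE]
  have hPx : ∀ (c : ℂ) w,
      star x ⬝ᵥ (diagonal (fun k => Complex.exp (c * μ k)) *ᵥ w)
        = Complex.exp (c * E₀) * (star x ⬝ᵥ w) := by
    intro c w
    rw [dotProduct_mulVec]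
    have hv : star x ᵥ* diagonal (fun k => Complex.exp (c * μ k))
        = Complex.exp (c * E₀) • star x := by
      funext k
      rw [vecMul_diagonal]
      simpa [mul_comm] using hconj c k
    rw [hv, smul_dotProduct, smul_eq_mul]
  -- eigenvalue lower bound
  have hEk : ∀ k, E₀ ≤ μ k := by
    intro k
    have hb := hH.eigenvalues_eq k
    have hnv := hH.eigenvectorBasis.orthonormal.1 k
    have hinner : (inner ℂ (hH.eigenvectorBasis k) (hH.eigenvectorBasis k) : ℂ) = 1 := by
      rw [inner_self_eq_norm_sq_to_K, hnv]; norm_num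
    have hv1 : star (⇑(hH.eigenvectorBasis k)) ⬝ᵥ ⇑(hH.eigenvectorBasis k) = (1 : ℂ) := by
      rw [← hinner, EuclideanSpace.inner_eq_star_dotProduct, dotProduct_comm]
    have hm := hmin ⇑(hH.eigenvectorBasis k)
    rw [hv1] at hm
    simp only [Complex.one_re, mul_one] at hm
    rw [hμdef, hb]
    simpa [RCLike.re_to_complex] using hm
  -- the two expectation values
  have hA : (star ψ₀ ⬝ᵥ (NormedSpace.exp ((Complex.I * t) • H) * Φ *
        NormedSpace.exp ((-(Complex.I * t)) • H) * Φ).mulVec ψ₀)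
      = Complex.exp (Complex.I * t * E₀) *
        (star y ⬝ᵥ (diagonal (fun k => Complex.exp (-(Complex.I * t) * μ k)) *ᵥ y)) := by
    rw [hexp, hexp]
    simp only [← mulVec_mulVec]
    rw [h1, hPx, h2, h3, ← hφdef, h1', ← hydef]
  have hyy : star y ⬝ᵥ y = star φ ⬝ᵥ φ := by
    have h := h2' φ
    rw [← hydef] at h
    exact h
  have hB : (star ψ₀ ⬝ᵥ (Φ * Φ).mulVec ψ₀) = star y ⬝ᵥ y := by
    simp only [← mulVec_mulVec]
    rw [h3, ← hφdef, hyy]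
  -- rewrite both terms as sums
  have hsum1 : star y ⬝ᵥ (diagonal (fun k => Complex.exp (-(Complex.I * t) * μ k)) *ᵥ y)
      = ∑ k, star (y k) * (Complex.exp (-(Complex.I * t) * μ k) * y k) := by
    simp [dotProduct, mulVec_diagonal]
  have hsum2 : star y ⬝ᵥ y = ∑ k, star (y k) * y k := by
    simp [dotProduct]
  rw [hA, hB, hsum1, hsum2, Finset.mul_sum, ← Finset.sum_sub_distrib]
  -- termwise bound
  have key : ∀ k, ‖Complex.exp (Complex.I * t * E₀) *
        (star (y k) * (Complex.exp (-(Complex.I * t) * μ k) * y k)) - star (y k) * y k‖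
      ≤ Complex.normSq (y k) * (t * (μ k - E₀)) := by
    intro k
    have e1 : Complex.exp (Complex.I * t * E₀) *
          (star (y k) * (Complex.exp (-(Complex.I * t) * μ k) * y k)) - star (y k) * y k
        = (star (y k) * y k) *
            (Complex.exp (((t * (E₀ - μ k) : ℝ) : ℂ) * Complex.I) - 1) := by
      rw [mul_sub, mul_one]
      congr 1
      rw [show (star (y k) * y k) * Complex.exp (((t * (E₀ - μ k) : ℝ) : ℂ) * Complex.I)
          = (star (y k) * y k) * (Complex.exp (Complex.I * t * E₀) *
              Complex.exp (-(Complex.I * t) * μ k)) from by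
        rw [← Complex.exp_add]; congr 2; push_cast; ring]
      ring
    rw [e1, norm_mul]
    have e2 : star (y k) * y k = (Complex.normSq (y k) : ℂ) := by
      rw [RCLike.star_def, mul_comm, Complex.mul_conj]
    have e3 : ‖star (y k) * y k‖ = Complex.normSq (y k) := by
      rw [e2, Complex.norm_real, Real.norm_eq_abs, abs_of_nonneg (Complex.normSq_nonneg _)]
    rw [e3]
    have e4 := abs_exp_mul_I_sub_one_le (t * (E₀ - μ k))
    have e5 : |t * (E₀ - μ k)| = t * (μ k - E₀) := by
      rw [abs_mul, abs_of_nonneg ht, abs_of_nonpos (by linarith [hEk k])]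
      ring
    exact mul_le_mul_of_nonneg_left (e5 ▸ e4) (Complex.normSq_nonneg _)
  have habs : ‖∑ k, (Complex.exp (Complex.I * t * E₀) *
        (star (y k) * (Complex.exp (-(Complex.I * t) * μ k) * y k)) - star (y k) * y k)‖
      ≤ ∑ k, Complex.normSq (y k) * (t * (μ k - E₀)) :=
    (norm_sum_le _ _).trans
      (Finset.sum_le_sum fun k _ => key k)
  refine habs.trans ?_
  -- relate the sum to the double commutator expectation
  have hH3 : ∀ w, star ψ₀ ⬝ᵥ (H *ᵥ w) = (E₀ : ℂ) * (star ψ₀ ⬝ᵥ w) := by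
    intro w
    rw [dotProduct_mulVec]
    have hrow : star ψ₀ ᵥ* H = (E₀ : ℂ) • star ψ₀ := by
      conv_lhs => rw [← hH.eq]
      rw [← star_mulVec, hground, star_smul]
      simp [Complex.star_def, Complex.conj_ofReal]
    rw [hrow, smul_dotProduct, smul_eq_mul]
  have hCexp : star ψ₀ ⬝ᵥ ((Φ * (H * Φ - Φ * H) - (H * Φ - Φ * H) * Φ).mulVec ψ₀)
      = 2 * (star φ ⬝ᵥ (H *ᵥ φ)) - 2 * E₀ * (star φ ⬝ᵥ φ) := by
    rw [Matrix.mul_sub, Matrix.sub_mul, Matrix.sub_mulVec, Matrix.sub_mulVec,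
      Matrix.sub_mulVec, dotProduct_sub, dotProduct_sub, dotProduct_sub]
    simp only [← mulVec_mulVec]
    rw [hground]
    simp only [mulVec_smul, dotProduct_smul, smul_eq_mul]
    simp only [h3, hH3]
    simp only [← hφdef]
    ring
  have hHφ : star φ ⬝ᵥ (H *ᵥ φ) = star y ⬝ᵥ (D *ᵥ y) := by
    conv_lhs => rw [hspec]
    simp only [← mulVec_mulVec]
    rw [h1', ← hydef]
  have hre1 : star y ⬝ᵥ (D *ᵥ y) = ((∑ k, Complex.normSq (y k) * μ k : ℝ) : ℂ) := by
    rw [hDdef]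
    simp only [dotProduct, mulVec_diagonal]
    push_cast
    refine Finset.sum_congr rfl fun k _ => ?_
    have hsk : star y k = (starRingEnd ℂ) (y k) := rfl
    rw [hsk, show (starRingEnd ℂ) (y k) * ((μ k : ℂ) * y k)
        = (y k * (starRingEnd ℂ) (y k)) * (μ k : ℂ) from by ring, Complex.mul_conj]
  have hre2 : star y ⬝ᵥ y = ((∑ k, Complex.normSq (y k) : ℝ) : ℂ) := by
    simp only [dotProduct]
    push_cast
    refine Finset.sum_congr rfl fun k _ => ?_
    have hsk : star y k = (starRingEnd ℂ) (y k) := rfl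
    rw [hsk, mul_comm, Complex.mul_conj]
  -- Cauchy-Schwarz bound for the double commutator expectation
  set C : Matrix (Fin n) (Fin n) ℂ := Φ * (H * Φ - Φ * H) - (H * Φ - Φ * H) * Φ with hCdef
  have hCS : (star ψ₀ ⬝ᵥ C.mulVec ψ₀).re ≤ ‖C‖ := by
    set v₀ : EuclideanSpace ℂ (Fin n) := (WithLp.equiv 2 (Fin n → ℂ)).symm ψ₀ with hv₀
    have hnv : ‖v₀‖ = 1 := by
      have h := inner_self_eq_norm_sq (𝕜 := ℂ) v₀
      rw [EuclideanSpace.inner_eq_star_dotProduct] at h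
      simp only [hv₀, Equiv.apply_symm_apply] at h
      rw [dotProduct_comm] at h
      change RCLike.re (star ψ₀ ⬝ᵥ ψ₀) = _ at h
      rw [hnorm] at h
      have h2 : ‖v₀‖ ^ 2 = 1 := by
        rw [hv₀, ← h]
        simp [RCLike.re_to_complex]
      have h3 : (‖v₀‖ - 1) * (‖v₀‖ + 1) = 0 := by nlinarith
      rcases mul_eq_zero.mp h3 with h4 | h4
      · linarith
      · nlinarith [norm_nonneg v₀]
    have hinner : (inner ℂ v₀ ((WithLp.equiv 2 (Fin n → ℂ)).symm (C *ᵥ ψ₀)) : ℂ)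
        = star ψ₀ ⬝ᵥ C.mulVec ψ₀ := by
      rw [EuclideanSpace.inner_eq_star_dotProduct]
      simp [hv₀]
      exact dotProduct_comm _ _
    have hcs := norm_inner_le_norm (𝕜 := ℂ) v₀ ((WithLp.equiv 2 (Fin n → ℂ)).symm (C *ᵥ ψ₀))
    rw [hinner] at hcs
    have hmv : ‖(WithLp.equiv 2 (Fin n → ℂ)).symm (C *ᵥ ψ₀)‖ ≤ ‖C‖ * ‖v₀‖ :=
      Matrix.l2_opNorm_mulVec C v₀
    calc (star ψ₀ ⬝ᵥ C.mulVec ψ₀).re ≤ ‖star ψ₀ ⬝ᵥ C.mulVec ψ₀‖ :=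
          Complex.re_le_norm _
      _ = ‖(star ψ₀ ⬝ᵥ C.mulVec ψ₀ : ℂ)‖ := rfl
      _ ≤ ‖v₀‖ * ‖(WithLp.equiv 2 (Fin n → ℂ)).symm (C *ᵥ ψ₀)‖ := hcs
      _ ≤ ‖v₀‖ * (‖C‖ * ‖v₀‖) := by
          exact mul_le_mul_of_nonneg_left hmv (norm_nonneg _)
      _ = ‖C‖ := by rw [hnv]; ring
  -- put everything together
  have hSre : (star ψ₀ ⬝ᵥ C.mulVec ψ₀).re
      = 2 * ∑ k, Complex.normSq (y k) * (μ k - E₀) := by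
    rw [hCdef, hCexp, hHφ, hyy.symm, hre1, hre2,
      show (2 * ((∑ k, Complex.normSq (y k) * μ k : ℝ) : ℂ) -
          2 * (E₀ : ℂ) * ((∑ k, Complex.normSq (y k) : ℝ) : ℂ))
        = ((2 * ∑ k, Complex.normSq (y k) * μ k
            - 2 * E₀ * ∑ k, Complex.normSq (y k) : ℝ) : ℂ) from by push_cast; ring,
      Complex.ofReal_re, Finset.mul_sum, Finset.mul_sum, Finset.mul_sum,
      ← Finset.sum_sub_distrib]
    exact Finset.sum_congr rfl fun k _ => by ring
  have hfinal : ∑ k, Complex.normSq (y k) * (t * (μ k - E₀))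
      = t / 2 * (2 * ∑ k, Complex.normSq (y k) * (μ k - E₀)) := by
    rw [Finset.mul_sum, Finset.mul_sum]
    refine Finset.sum_congr rfl fun k _ => by ring
  rw [hfinal, ← hSre]
  exact mul_le_mul_of_nonneg_left hCS (by linarith)
end
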